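/- Let M be an F-subspace of V such that V = M + M⊥, where M⊥ = { v ∈ V : B(v,m) = 0 for all m ∈ M }. Let g be an invertible element of C(V,Q) lying in the even part of the subalgebra generated by ι(M), and suppose g·ι(m)·g⁻¹ ∈ ι(M) for all m ∈ M. Then g·ι(x)·g⁻¹ ∈ ι(V) for all x ∈ V; that is, conjugation by g preserves the image of V in the Clifford algebra. -/
import Mathlib

open CliffordAlgebra in
lemma involute_eq_self_of_even {F V : Type*} [Field F] [AddCommGroup V] [Module F V]
    (Q : QuadraticForm F V) (x : CliffordAlgebra Q) (hx : x ∈ evenOdd Q 0) :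
    involute x = x := by
  refine CliffordAlgebra.even_induction (Q := Q)
    (motive := fun x _ => CliffordAlgebra.involute x = x) ?_ ?_ ?_ x hx
  · intro r; simp
  · intro a b _ _ ha hb; simp [ha, hb]
  · intro m₁ m₂ a _ ih; simp [ih]

/-- Let `F` be a field of characteristic different from 2, `V` an `F`-vector space with quadratic
form `Q`, and `M ⊆ V` a subspace such that `V = M + M⊥` (every `x ∈ V` is a sum of an element of
`M` and a vector orthogonal to `M` for the polar form).  Let `g` be an invertible element of
`C(V,Q)` lying in the even part of the subalgebra generated by `ι(M)`, and suppose that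
`g · ι(m) · g⁻¹ ∈ ι(M)` for all `m ∈ M`.  Then `g · ι(x) · g⁻¹ ∈ ι(V)` for all `x ∈ V`, i.e.
conjugation by `g` preserves the image of `V` in the Clifford algebra. -/
theorem clifford_conj_preserves_ι_of_conj_preserves_subspace
    {F V : Type*} [Field F] [AddCommGroup V] [Module F V]
    (hchar : (2 : F) ≠ 0)
    (Q : QuadraticForm F V) (M : Submodule F V)
    (hM : ∀ x : V, ∃ m ∈ M, ∃ w : V,
      (∀ m' ∈ M, QuadraticMap.polar Q w m' = 0) ∧ x = m + w)
    (g : (CliffordAlgebra Q)ˣ)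
    (hg₁ : (g : CliffordAlgebra Q) ∈ Algebra.adjoin F (CliffordAlgebra.ι Q '' (M : Set V)))
    (hg₂ : (g : CliffordAlgebra Q) ∈ CliffordAlgebra.evenOdd Q 0)
    (hconj : ∀ m ∈ M,
      (g : CliffordAlgebra Q) * CliffordAlgebra.ι Q m * (↑g⁻¹ : CliffordAlgebra Q)
        ∈ CliffordAlgebra.ι Q '' (M : Set V)) :
    ∀ x : V,
      (g : CliffordAlgebra Q) * CliffordAlgebra.ι Q x * (↑g⁻¹ : CliffordAlgebra Q)
        ∈ Set.range (CliffordAlgebra.ι Q) := by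
  intro x
  obtain ⟨m, hm, w, hw, rfl⟩ := hM x
  -- ι w "super-commutes" with everything in the subalgebra generated by ι(M)
  have key : CliffordAlgebra.ι Q w * (g : CliffordAlgebra Q)
      = CliffordAlgebra.involute (g : CliffordAlgebra Q) * CliffordAlgebra.ι Q w := by
    refine Algebra.adjoin_induction ?_ ?_ ?_ ?_ hg₁
    · rintro a ⟨m', hm', rfl⟩
      have h0 : QuadraticMap.polar Q w m' = 0 := hw m' hm'
      have := CliffordAlgebra.ι_mul_ι_add_swap (Q := Q) w m'
      rw [h0, map_zero] at this
      rw [eq_neg_of_add_eq_zero_left this, CliffordAlgebra.involute_ι, neg_mul]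
    · intro r
      rw [CliffordAlgebra.involute.commutes, Algebra.commutes]
    · intro a b _ _ ha hb
      rw [mul_add, map_add, add_mul, ha, hb]
    · intro a b _ _ ha hb
      rw [map_mul, ← mul_assoc, ha, mul_assoc, hb, mul_assoc]
  rw [involute_eq_self_of_even Q _ hg₂] at key
  -- hence g commutes with ι w
  have hcomm : (g : CliffordAlgebra Q) * CliffordAlgebra.ι Q w * (↑g⁻¹ : CliffordAlgebra Q)
      = CliffordAlgebra.ι Q w := by
    rw [← key, mul_assoc, Units.mul_inv, mul_one]
  obtain ⟨m', _, hm'eq⟩ := hconj m hm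
  refine ⟨m' + w, ?_⟩
  rw [map_add, map_add, mul_add, add_mul, hm'eq, hcomm]
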